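/- arXiv:2011.13166 — 2 statements merged into one kernel-verified Lean document; each statement's English description precedes it below -/
import Mathlib

section
/- Relaxed smoothness version of the bias bound: if L : ℝ^d → ℝ is twice continuously differentiable and its Hessian ∇²L is M-Lipschitz (‖∇²L(x) − ∇²L(y)‖ ≤ M·‖x − y‖ in operator norm for all x, y), then for every θ ∈ ℝ^d and c > 0 the two-query gradient estimator satisfies ‖E[ĝ(θ,c)] − ∇L(θ)‖ ≤ (M·c²/2)·E[‖Δ‖³·‖φ(Δ)‖]; in particular the bias is still O(c²). -/
open MeasureTheory Filter Topology

section Aux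

variable {E : Type*} [NormedAddCommGroup E] [NormedSpace ℝ E]

private lemma hess_lip' {L : E → ℝ} {M : ℝ}
    (hLip : ∀ x y, ‖iteratedFDeriv ℝ 2 L x - iteratedFDeriv ℝ 2 L y‖ ≤ M * ‖x - y‖)
    (x y : E) : ‖fderiv ℝ (fderiv ℝ L) y - fderiv ℝ (fderiv ℝ L) x‖ ≤ M * ‖y - x‖ := by
  have hM0 : 0 ≤ M * ‖y - x‖ :=
    (norm_nonneg (iteratedFDeriv ℝ 2 L y - iteratedFDeriv ℝ 2 L x)).trans (hLip y x)
  refine ContinuousLinearMap.opNorm_le_bound _ hM0 (fun a => ?_)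
  refine ContinuousLinearMap.opNorm_le_bound _ (by positivity) (fun b => ?_)
  have key : ((fderiv ℝ (fderiv ℝ L) y - fderiv ℝ (fderiv ℝ L) x) a) b
      = (iteratedFDeriv ℝ 2 L y - iteratedFDeriv ℝ 2 L x) ![a, b] := by
    simp [iteratedFDeriv_two_apply]
  rw [key]
  calc ‖(iteratedFDeriv ℝ 2 L y - iteratedFDeriv ℝ 2 L x) ![a, b]‖
      ≤ ‖iteratedFDeriv ℝ 2 L y - iteratedFDeriv ℝ 2 L x‖ * ∏ i, ‖![a, b] i‖ :=
        ContinuousMultilinearMap.le_opNorm _ _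
    _ ≤ M * ‖y - x‖ * (‖a‖ * ‖b‖) := by
        rw [Fin.prod_univ_two]
        simp only [Matrix.cons_val_zero, Matrix.cons_val_one, Matrix.head_cons]
        exact mul_le_mul_of_nonneg_right (hLip y x) (by positivity)
    _ = M * ‖y - x‖ * ‖a‖ * ‖b‖ := by ring

private lemma fderiv_taylor' {L : E → ℝ} {M : ℝ} (hM : 0 ≤ M) (hL : ContDiff ℝ 2 L)
    (hLip : ∀ x y, ‖iteratedFDeriv ℝ 2 L x - iteratedFDeriv ℝ 2 L y‖ ≤ M * ‖x - y‖)
    (x y : E) :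
    ‖fderiv ℝ L y - fderiv ℝ L x - fderiv ℝ (fderiv ℝ L) x (y - x)‖ ≤ M * ‖y - x‖ ^ 2 := by
  set H := fderiv ℝ (fderiv ℝ L) with hH
  have hdL : ContDiff ℝ 1 (fderiv ℝ L) := hL.fderiv_right (le_refl _)
  set F : E → (E →L[ℝ] ℝ) := fun z => fderiv ℝ L z - H x z with hF
  have hdiff : ∀ z, DifferentiableAt ℝ F z := fun z =>
    ((hdL.differentiable one_ne_zero) z).sub ((H x).differentiableAt)
  have hfd : ∀ z, fderiv ℝ F z = H z - H x := by
    intro z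
    rw [hF]
    rw [fderiv_fun_sub ((hdL.differentiable one_ne_zero) z) (H x).differentiableAt,
      (H x).fderiv]
  have key : ‖F y - F x‖ ≤ (M * ‖y - x‖) * ‖y - x‖ := by
    refine (convex_closedBall x ‖y - x‖).norm_image_sub_le_of_norm_fderiv_le
      (fun z _ => hdiff z) (fun z hz => ?_)
      (Metric.mem_closedBall_self (norm_nonneg _))
      (by simp [Metric.mem_closedBall, dist_eq_norm])
    rw [hfd z]
    calc ‖H z - H x‖ ≤ M * ‖z - x‖ := hess_lip' hLip x z
      _ ≤ M * ‖y - x‖ := by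
          have h2 := hz
          rw [Metric.mem_closedBall, dist_eq_norm] at h2
          exact mul_le_mul_of_nonneg_left h2 hM
  have : F y - F x = fderiv ℝ L y - fderiv ℝ L x - H x (y - x) := by
    rw [hF]
    simp only [map_sub]
    abel
  rw [this] at key
  calc ‖fderiv ℝ L y - fderiv ℝ L x - H x (y - x)‖ ≤ M * ‖y - x‖ * ‖y - x‖ := key
    _ = M * ‖y - x‖ ^ 2 := by ring

private lemma symm_diff_bound' {L : E → ℝ} {M : ℝ} (hM : 0 ≤ M) (hL : ContDiff ℝ 2 L)
    (hLip : ∀ x y, ‖iteratedFDeriv ℝ 2 L x - iteratedFDeriv ℝ 2 L y‖ ≤ M * ‖x - y‖)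
    (x h : E) :
    |L (x + h) - L (x - h) - 2 * fderiv ℝ L x h| ≤ M * ‖h‖ ^ 3 := by
  set g : E → (E →L[ℝ] ℝ) := fderiv ℝ L with hg
  have hdL : Differentiable ℝ L := hL.differentiable (by norm_num)
  set u : ℝ → ℝ := fun t => L (x + t • h) - L (x - t • h) - (2 * t) * g x h with hu
  set v : ℝ → ℝ := fun t => g (x + t • h) h + g (x - t • h) h - 2 * g x h with hv
  have hderiv : ∀ t : ℝ, HasDerivAt u (v t) t := by
    intro t
    have h1 : HasDerivAt (fun t : ℝ => x + t • h) h t := by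
      simpa using ((hasDerivAt_id t).smul_const h).const_add x
    have h2 : HasDerivAt (fun t : ℝ => x - t • h) (-h) t := by
      simpa [sub_eq_add_neg] using ((hasDerivAt_id t).smul_const h).neg.const_add x
    have H1 : HasDerivAt (fun t : ℝ => L (x + t • h)) (g (x + t • h) h) t :=
      (hdL (x + t • h)).hasFDerivAt.comp_hasDerivAt t h1
    have H2 : HasDerivAt (fun t : ℝ => L (x - t • h)) (g (x - t • h) (-h)) t :=
      (hdL (x - t • h)).hasFDerivAt.comp_hasDerivAt t h2
    have H3 : HasDerivAt (fun t : ℝ => (2 * t) * g x h) (2 * g x h) t := by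
      simpa using (hasDerivAt_id t).const_mul 2 |>.mul_const (g x h)
    have := (H1.sub H2).sub H3
    refine this.congr_deriv ?_
    rw [hv]
    simp only [map_neg]
    ring
  have hcont : Continuous v := by
    have hgc : Continuous g := (hL.continuous_fderiv (by norm_num))
    have c1 : Continuous fun t : ℝ => g (x + t • h) h :=
      (ContinuousLinearMap.apply ℝ ℝ h).continuous.comp (hgc.comp (by continuity))
    have c2 : Continuous fun t : ℝ => g (x - t • h) h :=
      (ContinuousLinearMap.apply ℝ ℝ h).continuous.comp (hgc.comp (by continuity))
    exact (c1.add c2).sub continuous_const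
  have hFTC : ∫ t in (0:ℝ)..1, v t = u 1 - u 0 :=
    intervalIntegral.integral_eq_sub_of_hasDerivAt
      (fun t _ => hderiv t) (hcont.intervalIntegrable 0 1)
  have hu0 : u 0 = 0 := by simp [hu]
  have hu1 : u 1 = L (x + h) - L (x - h) - 2 * g x h := by simp [hu]
  have hbound : ∀ t ∈ Set.uIoc (0:ℝ) 1, ‖v t‖ ≤ 2 * M * ‖h‖ ^ 3 * t ^ 2 := by
    intro t ht
    rw [Set.uIoc_of_le (by norm_num)] at ht
    set H := fderiv ℝ (fderiv ℝ L) with hH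
    have key : v t = (g (x + t • h) - g x - H x (t • h)) h
        + (g (x - t • h) - g x - H x (-(t • h))) h := by
      rw [hv]
      simp only [ContinuousLinearMap.sub_apply, map_neg, ContinuousLinearMap.neg_apply]
      ring
    rw [key]
    have b1 : ‖(g (x + t • h) - g x - H x (t • h)) h‖ ≤ M * ‖t • h‖ ^ 2 * ‖h‖ := by
      have := ContinuousLinearMap.le_opNorm (g (x + t • h) - g x - H x (t • h)) h
      refine this.trans ?_
      have e1' : ‖g (x + t • h) - g x - H x (x + t • h - x)‖ ≤ M * ‖t • h‖ ^ 2 := by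
        refine (fderiv_taylor' hM hL hLip x (x + t • h)).trans_eq ?_
        rw [add_sub_cancel_left]
      have heq : x + t • h - x = t • h := by abel
      rw [heq] at e1'
      exact mul_le_mul_of_nonneg_right e1' (norm_nonneg _)
    have b2 : ‖(g (x - t • h) - g x - H x (-(t • h))) h‖ ≤ M * ‖t • h‖ ^ 2 * ‖h‖ := by
      have := ContinuousLinearMap.le_opNorm (g (x - t • h) - g x - H x (-(t • h))) h
      refine this.trans ?_
      have e2' : ‖g (x - t • h) - g x - H x (x - t • h - x)‖ ≤ M * ‖t • h‖ ^ 2 := by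
        refine (fderiv_taylor' hM hL hLip x (x - t • h)).trans_eq ?_
        rw [sub_sub_cancel_left, norm_neg]
      have : x - t • h - x = -(t • h) := by abel
      rw [this] at e2'
      exact mul_le_mul_of_nonneg_right e2' (norm_nonneg _)
    calc ‖(g (x + t • h) - g x - H x (t • h)) h + (g (x - t • h) - g x - H x (-(t • h))) h‖
        ≤ ‖(g (x + t • h) - g x - H x (t • h)) h‖ + ‖(g (x - t • h) - g x - H x (-(t • h))) h‖ :=
          norm_add_le _ _
      _ ≤ M * ‖t • h‖ ^ 2 * ‖h‖ + M * ‖t • h‖ ^ 2 * ‖h‖ := add_le_add b1 b2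
      _ = 2 * M * ‖h‖ ^ 3 * t ^ 2 := by
          rw [norm_smul, Real.norm_eq_abs, abs_of_pos ht.1]
          ring
  have hintle : ‖∫ t in (0:ℝ)..1, v t‖ ≤ 2 * M * ‖h‖ ^ 3 * (1/3) := by
    have hae : ∀ᵐ t ∂(MeasureTheory.volume.restrict (Set.uIoc (0:ℝ) 1)),
        ‖v t‖ ≤ 2 * M * ‖h‖ ^ 3 * t ^ 2 :=
      (ae_restrict_iff' measurableSet_uIoc).mpr (Filter.Eventually.of_forall hbound)
    have hbd : IntervalIntegrable (fun t : ℝ => 2 * M * ‖h‖ ^ 3 * t ^ 2)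
        MeasureTheory.volume 0 1 :=
      (continuous_const.mul (continuous_pow 2)).intervalIntegrable 0 1
    have := intervalIntegral.norm_integral_le_of_norm_le (by norm_num)
      (Filter.Eventually.of_forall fun t ht => hbound t (by rwa [Set.uIoc_of_le (by norm_num : (0:ℝ) ≤ 1)])) hbd
    refine this.trans_eq ?_
    rw [intervalIntegral.integral_const_mul, integral_pow]
    norm_num
  rw [hFTC, hu0, hu1, sub_zero, Real.norm_eq_abs] at hintle
  refine hintle.trans ?_
  nlinarith [norm_nonneg h, pow_nonneg (norm_nonneg h) 3]

end Aux

private lemma eucl_norm_le_sum' {d : ℕ} (x : EuclideanSpace ℝ (Fin d)) :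
    ‖x‖ ≤ ∑ i, |x i| := by
  rw [EuclideanSpace.norm_eq]
  have h1 : ∑ i, ‖x i‖ ^ 2 ≤ (∑ i, ‖x i‖) ^ 2 :=
    Finset.sum_sq_le_sq_sum_of_nonneg (fun i _ => norm_nonneg _)
  calc Real.sqrt (∑ i, ‖x i‖ ^ 2) ≤ Real.sqrt ((∑ i, ‖x i‖) ^ 2) := Real.sqrt_le_sqrt h1
    _ = ∑ i, ‖x i‖ := Real.sqrt_sq (Finset.sum_nonneg fun i _ => norm_nonneg _)
    _ = ∑ i, |x i| := by simp [Real.norm_eq_abs]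

private lemma eucl_integrable_of_components' {d : ℕ} {Ω : Type*} {m0 : MeasurableSpace Ω}
    {μ : Measure Ω} {f : Ω → EuclideanSpace ℝ (Fin d)}
    (hmeas : AEStronglyMeasurable f μ)
    (hint : ∀ i, Integrable (fun ω => f ω i) μ) : Integrable f μ := by
  refine Integrable.mono' (g := fun ω => ∑ i, |f ω i|) ?_ hmeas ?_
  · exact integrable_finset_sum _ (fun i _ => (hint i).abs)
  · exact Filter.Eventually.of_forall fun ω => eucl_norm_le_sum' (f ω)

private lemma eucl_integral_apply' {d : ℕ} {Ω : Type*} {m0 : MeasurableSpace Ω}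
    {μ : Measure Ω} {f : Ω → EuclideanSpace ℝ (Fin d)} (hf : Integrable f μ) (i : Fin d) :
    (∫ ω, f ω ∂μ) i = ∫ ω, f ω i ∂μ := by
  have := (EuclideanSpace.proj (𝕜 := ℝ) i).integral_comp_comm hf
  simpa using this.symm

private lemma fderiv_eq_grad_sum' {d : ℕ} (L : EuclideanSpace ℝ (Fin d) → ℝ)
    (θ v : EuclideanSpace ℝ (Fin d)) :
    fderiv ℝ L θ v = ∑ j, gradient L θ j * v j := by
  have h : fderiv ℝ L θ v = inner ℝ (gradient L θ) v := by
    rw [gradient, InnerProductSpace.toDual_symm_apply]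
  rw [h, PiLp.inner_apply]
  simp [RCLike.inner_apply, mul_comm]

private lemma noise_orth' {Ω : Type*} {m0 : MeasurableSpace Ω} (μ : Measure Ω)
    [IsProbabilityMeasure μ]
    {α : Type*} [MeasurableSpace α] {Δ : Ω → α} (hΔ : Measurable Δ)
    {ψ : α → ℝ} (hψ : Measurable ψ) {g : Ω → ℝ} (hg : Integrable g μ)
    (hcond : μ[g|MeasurableSpace.comap Δ inferInstance] =ᵐ[μ] 0)
    (hfg : Integrable (fun ω => ψ (Δ ω) * g ω) μ) :
    ∫ ω, ψ (Δ ω) * g ω ∂μ = 0 := by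
  set m := MeasurableSpace.comap Δ inferInstance with hm_def
  have hm : m ≤ m0 := hΔ.comap_le
  have hΔm : Measurable[m] Δ := Measurable.of_comap_le le_rfl
  have hf : StronglyMeasurable[m] (fun ω => ψ (Δ ω)) := (hψ.comp hΔm).stronglyMeasurable
  haveI : SigmaFinite (μ.trim hm) := by
    have : IsFiniteMeasure (μ.trim hm) := isFiniteMeasure_trim hm
    infer_instance
  have hpull := condExp_mul_of_stronglyMeasurable_left hf (by exact hfg) hg
  have h1 : ∫ ω, ψ (Δ ω) * g ω ∂μ = ∫ ω, (μ[(fun ω => ψ (Δ ω)) * g|m]) ω ∂μ :=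
    (integral_condExp hm).symm
  rw [h1]
  have h2 : (μ[(fun ω => ψ (Δ ω)) * g|m]) =ᵐ[μ] 0 := by
    refine hpull.trans ?_
    filter_upwards [hcond] with ω hω
    simp [Pi.mul_apply, hω]
  rw [integral_congr_ae h2]
  simp
/-- relaxed smoothness version of the bias bound: if `L` is twice
continuously differentiable with `M`-Lipschitz Hessian, then
`‖E[ĝ(θ,c)] − ∇L(θ)‖ ≤ (M c²/2) E[‖Δ‖³ ‖φ(Δ)‖]` for every `θ` and `c > 0`. -/
theorem bias_bound_of_two_query_gradient_estimator_of_lipschitz_hessian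
    (d : ℕ) (hd : 1 ≤ d)
    (L : EuclideanSpace ℝ (Fin d) → ℝ)
    (M : ℝ) (hM : 0 ≤ M)
    (hL : ContDiff ℝ 2 L)
    (hLip : ∀ x y, ‖iteratedFDeriv ℝ 2 L x - iteratedFDeriv ℝ 2 L y‖ ≤ M * ‖x - y‖)
    {Ω : Type*} {m0 : MeasurableSpace Ω} (μ : Measure Ω) [IsProbabilityMeasure μ]
    (Δ : Ω → EuclideanSpace ℝ (Fin d)) (hΔ : Measurable Δ)
    (φ : EuclideanSpace ℝ (Fin d) → EuclideanSpace ℝ (Fin d)) (hφ : Measurable φ)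
    -- `E[φ(Δ) Δᵀ] = I`
    (hid_int : ∀ i j : Fin d, Integrable (fun ω => φ (Δ ω) i * Δ ω j) μ)
    (hid : ∀ i j : Fin d, ∫ ω, φ (Δ ω) i * Δ ω j ∂μ = if i = j then (1 : ℝ) else 0)
    -- integrable noises with `E[ε⁺ − ε⁻ | Δ] = 0` a.s.
    (εp εm : Ω → ℝ) (hεp : Integrable εp μ) (hεm : Integrable εm μ)
    (hnoise : μ[fun ω => εp ω - εm ω|MeasurableSpace.comap Δ inferInstance] =ᵐ[μ] 0)
    -- the two-query gradient estimator
    (ghat : EuclideanSpace ℝ (Fin d) → ℝ → Ω → EuclideanSpace ℝ (Fin d))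
    (hghat : ∀ θ c ω, ghat θ c ω
      = ((L (θ + c • Δ ω) + εp ω - L (θ - c • Δ ω) - εm ω) / (2 * c)) • φ (Δ ω))
    -- finite moment `E[‖Δ‖³ ‖φ(Δ)‖] < ∞`
    (hmom_int : Integrable (fun ω => ‖Δ ω‖ ^ 3 * ‖φ (Δ ω)‖) μ)
    (θ : EuclideanSpace ℝ (Fin d)) (c : ℝ) (hc : 0 < c)
    (hint : Integrable (ghat θ c) μ) :
    ‖(∫ ω, ghat θ c ω ∂μ) - gradient L θ‖
      ≤ (M * c ^ 2 / 2) * ∫ ω, ‖Δ ω‖ ^ 3 * ‖φ (Δ ω)‖ ∂μ := by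
  classical
  set g : EuclideanSpace ℝ (Fin d) →L[ℝ] ℝ := fderiv ℝ L θ with hgdef
  set G : EuclideanSpace ℝ (Fin d) := gradient L θ with hGdef
  set lin : Ω → EuclideanSpace ℝ (Fin d) := fun ω => (g (Δ ω)) • φ (Δ ω) with hlin
  set rem : Ω → EuclideanSpace ℝ (Fin d) := fun ω =>
    ((L (θ + c • Δ ω) - L (θ - c • Δ ω)) / (2 * c) - g (Δ ω)) • φ (Δ ω) with hremdef
  set noi : Ω → EuclideanSpace ℝ (Fin d) := fun ω =>
    ((εp ω - εm ω) / (2 * c)) • φ (Δ ω) with hnoidef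
  have hc2 : (2 * c) ≠ 0 := by positivity
  -- decomposition
  have hdecomp : ∀ ω, ghat θ c ω = lin ω + rem ω + noi ω := by
    intro ω
    rw [hghat θ c ω]
    have hs : (L (θ + c • Δ ω) + εp ω - L (θ - c • Δ ω) - εm ω) / (2 * c)
        = g (Δ ω) + ((L (θ + c • Δ ω) - L (θ - c • Δ ω)) / (2 * c) - g (Δ ω))
          + (εp ω - εm ω) / (2 * c) := by
      field_simp
      ring
    rw [hs, add_smul, add_smul]
  -- measurability
  have hφΔ : Measurable fun ω => φ (Δ ω) := hφ.comp hΔ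
  have hgΔ : Measurable fun ω => g (Δ ω) := g.continuous.measurable.comp hΔ
  have hLp : Measurable fun ω => L (θ + c • Δ ω) :=
    hL.continuous.measurable.comp (measurable_const.add (hΔ.const_smul c))
  have hLm : Measurable fun ω => L (θ - c • Δ ω) :=
    hL.continuous.measurable.comp (measurable_const.sub (hΔ.const_smul c))
  have hlin_meas : Measurable lin := hgΔ.smul hφΔ
  have hrem_meas : Measurable rem := (((hLp.sub hLm).div_const (2 * c)).sub hgΔ).smul hφΔ
  -- remainder bound
  have hrem_bd : ∀ ω, ‖rem ω‖ ≤ M * c ^ 2 / 2 * (‖Δ ω‖ ^ 3 * ‖φ (Δ ω)‖) := by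
    intro ω
    rw [hremdef]
    simp only [norm_smul, Real.norm_eq_abs]
    have hsc : |(L (θ + c • Δ ω) - L (θ - c • Δ ω)) / (2 * c) - g (Δ ω)|
        ≤ M * c ^ 2 / 2 * ‖Δ ω‖ ^ 3 := by
      have h0 := symm_diff_bound' hM hL hLip θ (c • Δ ω)
      have hgc : g (c • Δ ω) = c * g (Δ ω) := by
        rw [hgdef]; simp
      have he : (L (θ + c • Δ ω) - L (θ - c • Δ ω)) / (2 * c) - g (Δ ω)
          = (L (θ + c • Δ ω) - L (θ - c • Δ ω) - 2 * g (c • Δ ω)) / (2 * c) := by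
        rw [hgc]; field_simp
      rw [he, abs_div, abs_of_pos (by positivity : (0:ℝ) < 2 * c), div_le_iff₀ (by positivity)]
      refine h0.trans_eq ?_
      rw [norm_smul, Real.norm_eq_abs, abs_of_pos hc]
      ring
    calc |(L (θ + c • Δ ω) - L (θ - c • Δ ω)) / (2 * c) - g (Δ ω)| * ‖φ (Δ ω)‖
        ≤ M * c ^ 2 / 2 * ‖Δ ω‖ ^ 3 * ‖φ (Δ ω)‖ :=
          mul_le_mul_of_nonneg_right hsc (norm_nonneg _)
      _ = M * c ^ 2 / 2 * (‖Δ ω‖ ^ 3 * ‖φ (Δ ω)‖) := by ring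
  -- integrability of the pieces
  have hrem_int : Integrable rem μ := by
    refine Integrable.mono' (hmom_int.const_mul (M * c ^ 2 / 2))
      hrem_meas.aestronglyMeasurable ?_
    exact Filter.Eventually.of_forall hrem_bd
  have hlin_i : ∀ i : Fin d, (fun ω => lin ω i)
      = fun ω => ∑ j, G j * (φ (Δ ω) i * Δ ω j) := by
    intro i
    funext ω
    have h1 : lin ω i = g (Δ ω) * φ (Δ ω) i := by
      rw [hlin]; simp [PiLp.smul_apply, smul_eq_mul]
    rw [h1, hgdef]
    rw [fderiv_eq_grad_sum' L θ (Δ ω), Finset.sum_mul]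
    exact Finset.sum_congr rfl fun j _ => by ring
  have hlin_int : Integrable lin μ := by
    refine eucl_integrable_of_components' hlin_meas.aestronglyMeasurable (fun i => ?_)
    rw [hlin_i i]
    exact integrable_finset_sum _ fun j _ => (hid_int i j).const_mul (G j)
  have hnoi_int : Integrable noi μ := by
    have he : noi = fun ω => ghat θ c ω - lin ω - rem ω := by
      funext ω
      rw [hdecomp ω]
      abel
    rw [he]
    exact (hint.sub hlin_int).sub hrem_int
  -- integral of lin is the gradient
  have hlin_val : ∫ ω, lin ω ∂μ = G := by
    refine PiLp.ext fun i => ?_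
    rw [eucl_integral_apply' hlin_int i]
    have : ∫ ω, lin ω i ∂μ = ∫ ω, ∑ j, G j * (φ (Δ ω) i * Δ ω j) ∂μ := by
      congr 1
      exact hlin_i i
    rw [this, integral_finset_sum _ fun j _ => (hid_int i j).const_mul (G j)]
    have hterm : ∀ j, ∫ ω, G j * (φ (Δ ω) i * Δ ω j) ∂μ
        = G j * (if i = j then 1 else 0) := by
      intro j
      rw [integral_const_mul, hid i j]
    simp only [hterm, mul_ite, mul_one, mul_zero]
    simp
  -- integral of noise is zero
  have hnoi_val : ∫ ω, noi ω ∂μ = 0 := by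
    refine PiLp.ext fun i => ?_
    rw [eucl_integral_apply' hnoi_int i]
    have hψ : Measurable fun v : EuclideanSpace ℝ (Fin d) => φ v i / (2 * c) :=
      ((EuclideanSpace.proj (𝕜 := ℝ) i).continuous.measurable.comp hφ).div_const _
    have hcomp : (fun ω => noi ω i)
        = fun ω => (φ (Δ ω) i / (2 * c)) * (εp ω - εm ω) := by
      funext ω
      rw [hnoidef]
      simp only [PiLp.smul_apply, smul_eq_mul]
      ring
    have hfg : Integrable (fun ω => (φ (Δ ω) i / (2 * c)) * (εp ω - εm ω)) μ := by
      rw [← hcomp]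
      have := (EuclideanSpace.proj (𝕜 := ℝ) i).integrable_comp hnoi_int
      simpa using this
    rw [hcomp]
    have := noise_orth' μ hΔ hψ (hεp.sub hεm) hnoise hfg
    simpa using this
  -- assemble
  have hsum : ∫ ω, ghat θ c ω ∂μ = G + ∫ ω, rem ω ∂μ := by
    calc ∫ ω, ghat θ c ω ∂μ = ∫ ω, (lin ω + rem ω + noi ω) ∂μ :=
          integral_congr_ae (Filter.Eventually.of_forall hdecomp)
      _ = ((∫ ω, lin ω ∂μ) + ∫ ω, rem ω ∂μ) + ∫ ω, noi ω ∂μ := by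
          rw [integral_add (f := fun ω => lin ω + rem ω) (hlin_int.add hrem_int) hnoi_int,
            integral_add hlin_int hrem_int]
      _ = G + ∫ ω, rem ω ∂μ := by rw [hlin_val, hnoi_val, add_zero]
  rw [hsum, add_sub_cancel_left]
  calc ‖∫ ω, rem ω ∂μ‖ ≤ ∫ ω, ‖rem ω‖ ∂μ := norm_integral_le_integral_norm _
    _ ≤ ∫ ω, M * c ^ 2 / 2 * (‖Δ ω‖ ^ 3 * ‖φ (Δ ω)‖) ∂μ :=
        integral_mono hrem_int.norm (hmom_int.const_mul _) hrem_bd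
    _ = M * c ^ 2 / 2 * ∫ ω, ‖Δ ω‖ ^ 3 * ‖φ (Δ ω)‖ ∂μ := integral_const_mul _ _
end

section
/- Lemma 2 (second moment of the CRN gradient estimator): under the stated assumptions there is a constant C, depending only on d, D₁, D₂ and D₅, such that for every θ ∈ ℝ^d and every c ∈ (0,1], the matrix E[ĝ(θ,c)·ĝ(θ,c)ᵀ] has entries E[ĝ(θ,c)·ĝ(θ,c)ᵀ]_{ij} = 𝟙{i=j}·∫_Ω ‖𝗀(θ,ω)‖² dP(ω) + 𝟙{i≠j}·2·∫_Ω 𝗀_i(θ,ω)·𝗀_j(θ,ω) dP(ω) + r_{ij}(θ,c), where |r_{ij}(θ,c)| ≤ C·c² for all i, j; here 𝗀_i(θ,ω) denotes the i-th component of 𝗀(θ,ω) := ∇_θ ℓ(θ,ω). -/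
open MeasureTheory Filter Topology

lemma taylor_second_order {E : Type*} [NormedAddCommGroup E] [NormedSpace ℝ E]
    (f : E → ℝ) (D₁ : ℝ) (hf : ContDiff ℝ 3 f)
    (hD : ∀ x, ‖iteratedFDeriv ℝ 3 f x‖ ≤ D₁) (x y : E) :
    ‖fderiv ℝ f y - fderiv ℝ f x - fderiv ℝ (fderiv ℝ f) x (y - x)‖ ≤ D₁ * ‖y - x‖ ^ 2 := by
  letI : NormedAddCommGroup (E →L[ℝ] E →L[ℝ] ℝ) := inferInstance
  letI : NormedSpace ℝ (E →L[ℝ] E →L[ℝ] ℝ) := inferInstance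
  set F := fderiv ℝ f with hF
  set A := fderiv ℝ F with hA
  have hf1 : ContDiff ℝ 2 F := hf.fderiv_right (by norm_num)
  have hf2 : ContDiff ℝ 1 A := hf1.fderiv_right (by norm_num)
  have hAd : ∀ z, ‖fderiv ℝ A z‖ ≤ D₁ := by
    intro z
    have e1 : ‖fderiv ℝ A z‖ = ‖iteratedFDeriv ℝ 0 (fderiv ℝ A) z‖ := by
      rw [norm_iteratedFDeriv_zero]
    rw [e1, norm_iteratedFDeriv_fderiv, hA, norm_iteratedFDeriv_fderiv, hF,
      norm_iteratedFDeriv_fderiv]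
    exact hD z
  have hALip : ∀ z w, ‖A w - A z‖ ≤ D₁ * ‖w - z‖ := by
    intro z w
    exact Convex.norm_image_sub_le_of_norm_fderiv_le
      (fun u _ => (hf2.differentiable (by norm_num)).differentiableAt)
      (fun u _ => hAd u) convex_univ (Set.mem_univ z) (Set.mem_univ w)
  -- mean value on closed ball
  have hG : ∀ z : E, HasFDerivAt (fun w => F w - A x (w - x)) (A z - A x) z := by
    intro z
    have h1 : HasFDerivAt F (A z) z := (hf1.differentiable (by norm_num)).differentiableAt.hasFDerivAt
    have h2 : HasFDerivAt (fun w : E => A x (w - x)) (A x) z := by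
      simpa using ((A x).hasFDerivAt (x := z)).sub_const (A x x)
    exact h1.sub h2
  have key : ‖(F y - A x (y - x)) - (F x - A x (x - x))‖ ≤ D₁ * ‖y - x‖ * ‖y - x‖ :=
    Convex.norm_image_sub_le_of_norm_hasFDerivWithin_le
    (f := fun w => F w - A x (w - x)) (f' := fun z => A z - A x)
    (s := Metric.closedBall x ‖y - x‖) (C := D₁ * ‖y - x‖)
    (fun z _ => (hG z).hasFDerivWithinAt)
    (fun z hz => by
      calc ‖A z - A x‖ ≤ D₁ * ‖z - x‖ := hALip x z
      _ ≤ D₁ * ‖y - x‖ := by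
          have : ‖z - x‖ ≤ ‖y - x‖ := by
            simpa [dist_eq_norm] using hz
          have hD0 : 0 ≤ D₁ := le_trans (norm_nonneg _) (hD x)
          exact mul_le_mul_of_nonneg_left this hD0)
    (convex_closedBall _ _) (Metric.mem_closedBall_self (norm_nonneg _))
    (by simp [Metric.mem_closedBall, dist_eq_norm])
  have e : F y - F x - A x (y - x) = (F y - A x (y - x)) - (F x - A x (x - x)) := by
    simp [sub_self]; abel
  rw [e]
  calc ‖(F y - A x (y - x)) - (F x - A x (x - x))‖ ≤ D₁ * ‖y - x‖ * ‖y - x‖ := key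
  _ = D₁ * ‖y - x‖ ^ 2 := by ring

lemma taylor_sym {E : Type*} [NormedAddCommGroup E] [NormedSpace ℝ E]
    (f : E → ℝ) (D₁ : ℝ) (hf : ContDiff ℝ 3 f)
    (hD : ∀ x, ‖iteratedFDeriv ℝ 3 f x‖ ≤ D₁) (θ h : E) :
    |f (θ + h) - f (θ - h) - 2 * fderiv ℝ f θ h| ≤ 2 * D₁ * ‖h‖ ^ 3 := by
  set F := fderiv ℝ f with hF
  set A := fderiv ℝ F with hA
  have hdiff : Differentiable ℝ f := hf.differentiable (by norm_num)
  set G : ℝ → ℝ := fun t => f (θ + t • h) - f (θ - t • h) - 2 * t * F θ h with hG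
  set G' : ℝ → ℝ := fun t => F (θ + t • h) h - F (θ - t • h) (-h) - 2 * F θ h with hG'
  have hder : ∀ t : ℝ, HasDerivAt G (G' t) t := by
    intro t
    have p1 : HasDerivAt (fun t : ℝ => θ + t • h) h t := by
      simpa using (((hasDerivAt_id t).smul_const h).const_add θ)
    have p2 : HasDerivAt (fun t : ℝ => θ - t • h) (-h) t := by
      simpa using (((hasDerivAt_id t).smul_const h).const_sub θ)
    have q1 : HasDerivAt (fun t : ℝ => f (θ + t • h)) (F (θ + t • h) h) t :=
      (hdiff.differentiableAt.hasFDerivAt).comp_hasDerivAt t p1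
    have q2 : HasDerivAt (fun t : ℝ => f (θ - t • h)) (F (θ - t • h) (-h)) t :=
      (hdiff.differentiableAt.hasFDerivAt).comp_hasDerivAt t p2
    have q3 : HasDerivAt (fun t : ℝ => 2 * t * F θ h) (2 * F θ h) t := by
      simpa using (((hasDerivAt_id t).const_mul (2:ℝ)).mul_const (F θ h))
    exact (q1.sub q2).sub q3
  have bound : ∀ t ∈ Set.Ico (0:ℝ) 1, ‖G' t‖ ≤ 2 * D₁ * ‖h‖ ^ 3 := by
    intro t ht
    have ht0 : 0 ≤ t := ht.1
    have ht1 : t ≤ 1 := le_of_lt ht.2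
    have e1 : θ + t • h - θ = t • h := by abel
    have e2 : θ - t • h - θ = -(t • h) := by abel
    have ka := taylor_second_order f D₁ hf hD θ (θ + t • h)
    have kb := taylor_second_order f D₁ hf hD θ (θ - t • h)
    rw [e1] at ka; rw [e2] at kb
    have hab : G' t = (F (θ + t • h) - F θ - A θ (t • h)) h
        + (F (θ - t • h) - F θ - A θ (-(t • h))) h := by
      simp [hG', ContinuousLinearMap.sub_apply, map_neg, ContinuousLinearMap.neg_apply]
      ring
    have hth : ‖t • h‖ ^ 2 ≤ ‖h‖ ^ 2 := by
      rw [norm_smul]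
      have : ‖t‖ ≤ 1 := by rw [Real.norm_eq_abs, abs_of_nonneg ht0]; exact ht1
      have h1 : ‖t‖ * ‖h‖ ≤ ‖h‖ := mul_le_of_le_one_left (norm_nonneg h) this
      exact pow_le_pow_left₀ (by positivity) h1 2
    have hD0 : 0 ≤ D₁ := le_trans (norm_nonneg _) (hD θ)
    have na : ‖(F (θ + t • h) - F θ - A θ (t • h)) h‖ ≤ D₁ * ‖h‖ ^ 2 * ‖h‖ := by
      calc ‖(F (θ + t • h) - F θ - A θ (t • h)) h‖
          ≤ ‖F (θ + t • h) - F θ - A θ (t • h)‖ * ‖h‖ :=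
            ContinuousLinearMap.le_opNorm _ h
        _ ≤ (D₁ * ‖t • h‖ ^ 2) * ‖h‖ := by
            exact mul_le_mul_of_nonneg_right ka (norm_nonneg h)
        _ ≤ D₁ * ‖h‖ ^ 2 * ‖h‖ := by
            have := mul_le_mul_of_nonneg_left hth hD0
            exact mul_le_mul_of_nonneg_right this (norm_nonneg h)
    have nb : ‖(F (θ - t • h) - F θ - A θ (-(t • h))) h‖ ≤ D₁ * ‖h‖ ^ 2 * ‖h‖ := by
      calc ‖(F (θ - t • h) - F θ - A θ (-(t • h))) h‖
          ≤ ‖F (θ - t • h) - F θ - A θ (-(t • h))‖ * ‖h‖ :=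
            ContinuousLinearMap.le_opNorm _ h
        _ ≤ (D₁ * ‖t • h‖ ^ 2) * ‖h‖ := by
            refine mul_le_mul_of_nonneg_right ?_ (norm_nonneg h)
            simpa [norm_neg] using kb
        _ ≤ D₁ * ‖h‖ ^ 2 * ‖h‖ := by
            have := mul_le_mul_of_nonneg_left hth hD0
            exact mul_le_mul_of_nonneg_right this (norm_nonneg h)
    calc ‖G' t‖ ≤ D₁ * ‖h‖ ^ 2 * ‖h‖ + D₁ * ‖h‖ ^ 2 * ‖h‖ := by
          rw [hab]; exact le_trans (norm_add_le _ _) (add_le_add na nb)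
      _ = 2 * D₁ * ‖h‖ ^ 3 := by ring
  have key := norm_image_sub_le_of_norm_deriv_le_segment'
    (f := G) (f' := G') (a := 0) (b := 1) (C := 2 * D₁ * ‖h‖ ^ 3)
    (fun t _ => (hder t).hasDerivWithinAt) bound 1 (by norm_num)
  have hG1 : G 1 = f (θ + h) - f (θ - h) - 2 * F θ h := by simp [hG]
  have hG0 : G 0 = 0 := by simp [hG]
  rw [hG1, hG0] at key
  simpa [Real.norm_eq_abs] using key


lemma coord_le_norm {d : ℕ} (v : EuclideanSpace ℝ (Fin d)) (i : Fin d) : |v i| ≤ ‖v‖ := by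
  rw [EuclideanSpace.norm_eq]
  have h1 : |v i| ^ 2 ≤ ∑ k, ‖v k‖ ^ 2 := by
    have := Finset.single_le_sum (f := fun k => ‖v k‖ ^ 2)
      (fun k _ => by positivity) (Finset.mem_univ i)
    simpa [Real.norm_eq_abs, sq_abs] using this
  calc |v i| = Real.sqrt (|v i| ^ 2) := by rw [Real.sqrt_sq (abs_nonneg _)]
  _ ≤ _ := Real.sqrt_le_sqrt h1

lemma inner_sum_eq {d : ℕ} (x y : EuclideanSpace ℝ (Fin d)) :
    (inner ℝ x y : ℝ) = ∑ k, x k * y k := by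
  simp [PiLp.inner_apply, RCLike.inner_apply, conj_trivial, mul_comm]

lemma norm_sq_eq_sum {d : ℕ} (x : EuclideanSpace ℝ (Fin d)) :
    ‖x‖ ^ 2 = ∑ k, x k ^ 2 := by
  rw [EuclideanSpace.norm_eq, Real.sq_sqrt (by positivity)]
  simp [Real.norm_eq_abs, sq_abs]

lemma fderiv_apply_eq_sum {d : ℕ} (f : EuclideanSpace ℝ (Fin d) → ℝ)
    (θ y : EuclideanSpace ℝ (Fin d)) (hf : DifferentiableAt ℝ f θ) :
    fderiv ℝ f θ y = ∑ k, gradient f θ k * y k := by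
  have h1 := hf.hasGradientAt
  have h2 : fderiv ℝ f θ = InnerProductSpace.toDual ℝ _ (gradient f θ) :=
    h1.hasFDerivAt.fderiv
  rw [h2, InnerProductSpace.toDual_apply_apply, inner_sum_eq]


lemma grad_coord_aemeasurable {d : ℕ} {Ω' : Type} [MeasurableSpace Ω'] (P : Measure Ω')
    (ℓ : EuclideanSpace ℝ (Fin d) → Ω' → ℝ)
    (hmeas : Measurable (fun p : EuclideanSpace ℝ (Fin d) × Ω' => ℓ p.1 p.2))
    (hae : ∀ᵐ ω' ∂P, ContDiff ℝ 3 (fun θ => ℓ θ ω'))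
    (θ : EuclideanSpace ℝ (Fin d)) (k : Fin d) :
    AEMeasurable (fun ω' => gradient (fun θ' => ℓ θ' ω') θ k) P := by
  set e : EuclideanSpace ℝ (Fin d) := EuclideanSpace.single k 1 with he
  set t : ℕ → ℝ := fun n => ((n : ℝ) + 1)⁻¹ with ht
  have htpos : ∀ n, 0 < t n := fun n => by positivity
  apply aemeasurable_of_tendsto_metrizable_ae (u := atTop)
    (f := fun (n : ℕ) ω' => (ℓ (θ + t n • e) ω' - ℓ θ ω') / t n)
  · intro n
    exact (((hmeas.comp measurable_prodMk_left).sub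
      (hmeas.comp measurable_prodMk_left)).div_const _).aemeasurable
  · filter_upwards [hae] with ω' hω'
    set f : EuclideanSpace ℝ (Fin d) → ℝ := fun θ' => ℓ θ' ω' with hfdef
    have hdiff : DifferentiableAt ℝ f θ := (hω'.differentiable (by norm_num)).differentiableAt
    set u : ℝ → ℝ := fun s => f (θ + s • e) with hu
    have hu0 : HasDerivAt u (fderiv ℝ f θ e) 0 := by
      have p1 : HasDerivAt (fun s : ℝ => θ + s • e) e 0 := by
        simpa using (((hasDerivAt_id (0:ℝ)).smul_const e).const_add θ)
      have hd2 : HasFDerivAt f (fderiv ℝ f θ) (θ + (0:ℝ) • e) := by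
        simpa using hdiff.hasFDerivAt
      exact hd2.comp_hasDerivAt (0:ℝ) p1
    have hslope := hasDerivAt_iff_tendsto_slope.mp hu0
    have hseq : Tendsto t atTop (𝓝[≠] (0:ℝ)) := by
      apply tendsto_nhdsWithin_of_tendsto_nhds_of_eventually_within
      · have := tendsto_one_div_add_atTop_nhds_zero_nat (𝕜 := ℝ)
        simpa [ht, one_div] using this
      · exact Eventually.of_forall fun n => (htpos n).ne'
    have hcomp := hslope.comp hseq
    have heq : (fun n => slope u 0 (t n)) = fun n => (ℓ (θ + t n • e) ω' - ℓ θ ω') / t n := by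
      funext n
      simp [slope_def_field, hu, hfdef]
    have hval : fderiv ℝ f θ e = gradient f θ k := by
      have h2 : fderiv ℝ f θ = InnerProductSpace.toDual ℝ _ (gradient f θ) :=
        hdiff.hasGradientAt.hasFDerivAt.fderiv
      rw [h2, InnerProductSpace.toDual_apply_apply, he]
      rw [EuclideanSpace.inner_single_right]; simp
    rw [Function.comp_def, heq, hval] at hcomp
    exact hcomp

set_option maxHeartbeats 1600000

/-- Lemma 2, second moment of the CRN gradient estimator: there is a
constant `C`, depending only on `d`, `D₁`, `D₂` and `D₅`, such that for every random loss
`ℓ` (with a.e. bounded third derivative and a.e. `‖∇ℓ‖_∞ ≤ D₅`), every perturbation `Δ`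
independent of `ω ∼ P` with a map `φ` satisfying the identity, moment and fourth-moment
conditions, every `θ` and every `c ∈ (0,1]`, each entry of `E[ĝ(θ,c) ĝ(θ,c)ᵀ]` equals the
stated diagonal/off-diagonal main term up to a remainder bounded by `C c²`. -/
theorem second_moment_of_crn_gradient_estimator
    (d : ℕ) (hd : 1 ≤ d)
    (D₁ D₂ D₅ : ℝ) (hD₁ : 0 ≤ D₁) (hD₂ : 0 ≤ D₂) (hD₅ : 0 ≤ D₅) :
    ∃ C : ℝ,
      ∀ (Ω' : Type) (mΩ' : MeasurableSpace Ω') (P : Measure Ω'), IsProbabilityMeasure P →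
      ∀ ℓ : EuclideanSpace ℝ (Fin d) → Ω' → ℝ,
        Measurable (fun p : EuclideanSpace ℝ (Fin d) × Ω' => ℓ p.1 p.2) →
        (∀ᵐ ω' ∂P, ContDiff ℝ 3 (fun θ => ℓ θ ω') ∧
          (∀ θ, ‖iteratedFDeriv ℝ 3 (fun θ' => ℓ θ' ω') θ‖ ≤ D₁) ∧
          (∀ θ, ∀ i : Fin d, |gradient (fun θ' => ℓ θ' ω') θ i| ≤ D₅)) →
      ∀ (Ωd : Type) (mΩd : MeasurableSpace Ωd) (μd : Measure Ωd), IsProbabilityMeasure μd →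
      ∀ Δ : Ωd → EuclideanSpace ℝ (Fin d), Measurable Δ →
      ∀ φ : EuclideanSpace ℝ (Fin d) → EuclideanSpace ℝ (Fin d), Measurable φ →
        -- `E[φ(Δ) Δᵀ] = I`
        (∀ i j : Fin d, Integrable (fun ωd => φ (Δ ωd) i * Δ ωd j) μd) →
        (∀ i j : Fin d,
          ∫ ωd, φ (Δ ωd) i * Δ ωd j ∂μd = if i = j then (1 : ℝ) else 0) →
        -- moment bounds `E[‖Δ‖^(2j) ‖φ(Δ)‖²] ≤ D₂`, `j = 0,1,2,3`
        (∀ j : ℕ, j ≤ 3 → Integrable (fun ωd => ‖Δ ωd‖ ^ (2 * j) * ‖φ (Δ ωd)‖ ^ 2) μd) →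
        (∀ j : ℕ, j ≤ 3 → ∫ ωd, ‖Δ ωd‖ ^ (2 * j) * ‖φ (Δ ωd)‖ ^ 2 ∂μd ≤ D₂) →
        -- fourth-moment identity
        (∀ i j p q : Fin d,
          Integrable (fun ωd => φ (Δ ωd) i * Δ ωd p * Δ ωd q * φ (Δ ωd) j) μd) →
        (∀ i j p q : Fin d,
          ∫ ωd, φ (Δ ωd) i * Δ ωd p * Δ ωd q * φ (Δ ωd) j ∂μd
            = (if i = j ∧ p = q then (1 : ℝ) else 0)
              + (if i ≠ j then
                  ((if p = i ∧ q = j then (1 : ℝ) else 0)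
                    + (if p = j ∧ q = i then (1 : ℝ) else 0))
                else 0)) →
      -- the CRN gradient estimator, on the product space `Ωd × Ω'`
      ∀ ghat : EuclideanSpace ℝ (Fin d) → ℝ → Ωd × Ω' → EuclideanSpace ℝ (Fin d),
        (∀ θ c p, ghat θ c p
          = ((ℓ (θ + c • Δ p.1) p.2 - ℓ (θ - c • Δ p.1) p.2) / (2 * c)) • φ (Δ p.1)) →
      ∀ (θ : EuclideanSpace ℝ (Fin d)) (c : ℝ), 0 < c → c ≤ 1 →
      ∀ i j : Fin d,
        |(∫ p, ghat θ c p i * ghat θ c p j ∂(μd.prod P))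
            - ((if i = j then ∫ ω', ‖gradient (fun θ' => ℓ θ' ω') θ‖ ^ 2 ∂P else 0)
              + (if i ≠ j then
                  2 * ∫ ω', (gradient (fun θ' => ℓ θ' ω') θ i)
                        * (gradient (fun θ' => ℓ θ' ω') θ j) ∂P
                else 0))|
          ≤ C * c ^ 2 := by
  refine ⟨D₁ ^ 2 * D₂ + 2 * d * D₅ * D₁ * D₂, ?_⟩
  intro Ω' mΩ' P hP ℓ hℓmeas hℓae Ωd mΩd μd hμd Δ hΔ φ hφ h1int h1val hmint hmval
    h4int h4val ghat hghat θ c hc hc1 i j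
  haveI := hP
  haveI := hμd
  have hd1 : (1 : ℝ) ≤ (d : ℝ) := by exact_mod_cast hd
  have hc2 : c ^ 2 ≤ 1 := by nlinarith
  set M : ℝ := (if i = j then ∫ ω', ‖gradient (fun θ' => ℓ θ' ω') θ‖ ^ 2 ∂P else 0)
      + (if i ≠ j then 2 * ∫ ω', (gradient (fun θ' => ℓ θ' ω') θ i)
            * (gradient (fun θ' => ℓ θ' ω') θ j) ∂P else 0) with hM
  set S : Ωd × Ω' → ℝ :=
    fun p => (ℓ (θ + c • Δ p.1) p.2 - ℓ (θ - c • Δ p.1) p.2) / (2 * c) with hS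
  set Phi : Ωd → ℝ := fun ωd => φ (Δ ωd) i * φ (Δ ωd) j with hPhi
  set ip : Ωd × Ω' → ℝ :=
    fun p => ∑ k, gradient (fun θ' => ℓ θ' p.2) θ k * Δ p.1 k with hip
  set T : Ωd × Ω' → ℝ := fun p => ip p ^ 2 * Phi p.1 with hT
  set W : Ωd → ℝ :=
    fun ωd => D₁ ^ 2 * (‖Δ ωd‖ ^ (2 * 3) * ‖φ (Δ ωd)‖ ^ 2)
      + 2 * d * D₅ * D₁ * (‖Δ ωd‖ ^ (2 * 2) * ‖φ (Δ ωd)‖ ^ 2) with hWdef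
  -- rewrite the integrand
  have hIeq : ∫ p, ghat θ c p i * ghat θ c p j ∂(μd.prod P)
      = ∫ p, S p ^ 2 * Phi p.1 ∂(μd.prod P) := by
    refine integral_congr_ae (Eventually.of_forall fun p => ?_)
    simp only [hghat, hS, hPhi, PiLp.smul_apply, smul_eq_mul]
    ring
  rw [hIeq]
  -- measurability
  have hcoord : ∀ k : Fin d, Measurable (fun v : EuclideanSpace ℝ (Fin d) => v k) :=
    fun k => by fun_prop
  have hSmeas : Measurable S := by
    have m1 : Measurable (fun p : Ωd × Ω' => ℓ (θ + c • Δ p.1) p.2) :=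
      hℓmeas.comp ((((hΔ.comp measurable_fst).const_smul c).const_add θ).prodMk
        measurable_snd)
    have m2 : Measurable (fun p : Ωd × Ω' => ℓ (θ - c • Δ p.1) p.2) :=
      hℓmeas.comp (((measurable_const.sub ((hΔ.comp measurable_fst).const_smul c))).prodMk
        measurable_snd)
    exact (m1.sub m2).div_const _
  have hPhimeas : Measurable Phi :=
    ((hcoord i).comp (hφ.comp hΔ)).mul ((hcoord j).comp (hφ.comp hΔ))
  have hImeas : Measurable (fun p : Ωd × Ω' => S p ^ 2 * Phi p.1) :=
    (hSmeas.pow_const 2).mul (hPhimeas.comp measurable_fst)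
  -- gradient facts
  have hgmeas : ∀ k : Fin d,
      AEMeasurable (fun ω' => gradient (fun θ' => ℓ θ' ω') θ k) P :=
    fun k => grad_coord_aemeasurable P ℓ hℓmeas (hℓae.mono fun ω' h => h.1) θ k
  have hgg_int : ∀ k l : Fin d,
      Integrable (fun ω' => gradient (fun θ' => ℓ θ' ω') θ k
        * gradient (fun θ' => ℓ θ' ω') θ l) P := by
    intro k l
    refine Integrable.mono' (integrable_const (D₅ * D₅))
      ((hgmeas k).mul (hgmeas l)).aestronglyMeasurable ?_
    filter_upwards [hℓae] with ω' h
    rw [Real.norm_eq_abs, abs_mul]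
    exact mul_le_mul (h.2.2 θ k) (h.2.2 θ l) (abs_nonneg _) hD₅
  -- μd-side integrands
  have hQ : ∀ k l : Fin d,
      Integrable (fun ωd => (Δ ωd k * Δ ωd l) * Phi ωd) μd := by
    intro k l
    have e : (fun ωd => (Δ ωd k * Δ ωd l) * Phi ωd)
        = fun ωd => φ (Δ ωd) i * Δ ωd k * Δ ωd l * φ (Δ ωd) j := by
      funext ωd; simp only [hPhi]; ring
    rw [e]; exact h4int i j k l
  have hQval : ∀ k l : Fin d,
      ∫ ωd, (Δ ωd k * Δ ωd l) * Phi ωd ∂μd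
        = (if i = j ∧ k = l then (1 : ℝ) else 0)
          + (if i ≠ j then
              ((if k = i ∧ l = j then (1 : ℝ) else 0)
                + (if k = j ∧ l = i then (1 : ℝ) else 0)) else 0) := by
    intro k l
    have e : (fun ωd => (Δ ωd k * Δ ωd l) * Phi ωd)
        = fun ωd => φ (Δ ωd) i * Δ ωd k * Δ ωd l * φ (Δ ωd) j := by
      funext ωd; simp only [hPhi]; ring
    rw [e]; exact h4val i j k l
  -- expansion of T
  have hexpand : T = fun p : Ωd × Ω' => ∑ k, ∑ l,
      ((Δ p.1 k * Δ p.1 l) * Phi p.1) * (gradient (fun θ' => ℓ θ' p.2) θ k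
        * gradient (fun θ' => ℓ θ' p.2) θ l) := by
    funext p
    simp only [hT, hip]
    rw [pow_two, Finset.sum_mul_sum, Finset.sum_mul]
    refine Finset.sum_congr rfl fun k _ => ?_
    rw [Finset.sum_mul]
    exact Finset.sum_congr rfl fun l _ => by ring
  have hterm_int : ∀ k l : Fin d, Integrable (fun p : Ωd × Ω' =>
      ((Δ p.1 k * Δ p.1 l) * Phi p.1) * (gradient (fun θ' => ℓ θ' p.2) θ k
        * gradient (fun θ' => ℓ θ' p.2) θ l)) (μd.prod P) :=
    fun k l => (hQ k l).mul_prod (hgg_int k l)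
  have hT_int : Integrable T (μd.prod P) := by
    rw [hexpand]
    exact integrable_finset_sum _ fun k _ => integrable_finset_sum _ fun l _ => hterm_int k l
  have hTval : ∫ p, T p ∂(μd.prod P) = ∑ k, ∑ l,
      (((if i = j ∧ k = l then (1 : ℝ) else 0)
        + (if i ≠ j then ((if k = i ∧ l = j then (1 : ℝ) else 0)
            + (if k = j ∧ l = i then (1 : ℝ) else 0)) else 0)))
        * ∫ ω', gradient (fun θ' => ℓ θ' ω') θ k * gradient (fun θ' => ℓ θ' ω') θ l ∂P := by
    rw [hexpand]
    rw [integral_finset_sum _ fun k _ => integrable_finset_sum _ fun l _ => hterm_int k l]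
    refine Finset.sum_congr rfl fun k _ => ?_
    rw [integral_finset_sum _ fun l _ => hterm_int k l]
    refine Finset.sum_congr rfl fun l _ => ?_
    rw [integral_prod_mul (fun ωd => (Δ ωd k * Δ ωd l) * Phi ωd)
      (fun ω' => gradient (fun θ' => ℓ θ' ω') θ k * gradient (fun θ' => ℓ θ' ω') θ l)]
    rw [hQval k l]
  have hTvalM : ∫ p, T p ∂(μd.prod P) = M := by
    rw [hTval, hM]
    by_cases hij : i = j
    · subst hij
      calc (∑ k, ∑ l, (((if i = i ∧ k = l then (1:ℝ) else 0)
            + (if i ≠ i then ((if k = i ∧ l = i then (1:ℝ) else 0)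
                + (if k = i ∧ l = i then (1:ℝ) else 0)) else 0)))
            * ∫ ω', gradient (fun θ' => ℓ θ' ω') θ k * gradient (fun θ' => ℓ θ' ω') θ l ∂P)
          = ∑ k, ∑ l, (if k = l then
              ∫ ω', gradient (fun θ' => ℓ θ' ω') θ k * gradient (fun θ' => ℓ θ' ω') θ l ∂P
              else 0) :=
            Finset.sum_congr rfl fun k _ => Finset.sum_congr rfl fun l _ => by
              simp [ite_mul]
        _ = ∑ k, ∫ ω', gradient (fun θ' => ℓ θ' ω') θ k
              * gradient (fun θ' => ℓ θ' ω') θ k ∂P :=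
            Finset.sum_congr rfl fun k _ => by simp [Finset.sum_ite_eq]
        _ = ∫ ω', ∑ k, gradient (fun θ' => ℓ θ' ω') θ k
              * gradient (fun θ' => ℓ θ' ω') θ k ∂P :=
            (integral_finset_sum _ fun k _ => hgg_int k k).symm
        _ = ∫ ω', ‖gradient (fun θ' => ℓ θ' ω') θ‖ ^ 2 ∂P := by
            refine integral_congr_ae (Eventually.of_forall fun ω' => ?_)
            dsimp only
            rw [norm_sq_eq_sum]
            exact Finset.sum_congr rfl fun k _ => by ring
        _ = (if i = i then ∫ ω', ‖gradient (fun θ' => ℓ θ' ω') θ‖ ^ 2 ∂P else 0)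
            + (if i ≠ i then 2 * ∫ ω', (gradient (fun θ' => ℓ θ' ω') θ i)
                * (gradient (fun θ' => ℓ θ' ω') θ i) ∂P else 0) := by simp
    · have e2 : ∫ ω', gradient (fun θ' => ℓ θ' ω') θ j * gradient (fun θ' => ℓ θ' ω') θ i ∂P
          = ∫ ω', gradient (fun θ' => ℓ θ' ω') θ i * gradient (fun θ' => ℓ θ' ω') θ j ∂P := by
        refine integral_congr_ae (Eventually.of_forall fun ω' => ?_)
        ring
      calc (∑ k, ∑ l, (((if i = j ∧ k = l then (1:ℝ) else 0)
            + (if i ≠ j then ((if k = i ∧ l = j then (1:ℝ) else 0)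
                + (if k = j ∧ l = i then (1:ℝ) else 0)) else 0)))
            * ∫ ω', gradient (fun θ' => ℓ θ' ω') θ k * gradient (fun θ' => ℓ θ' ω') θ l ∂P)
          = ∑ k, ∑ l, ((if k = i ∧ l = j then (1:ℝ) else 0)
              + (if k = j ∧ l = i then (1:ℝ) else 0))
              * ∫ ω', gradient (fun θ' => ℓ θ' ω') θ k
                  * gradient (fun θ' => ℓ θ' ω') θ l ∂P :=
            Finset.sum_congr rfl fun k _ => Finset.sum_congr rfl fun l _ => by
              simp [hij]
        _ = (∫ ω', gradient (fun θ' => ℓ θ' ω') θ i * gradient (fun θ' => ℓ θ' ω') θ j ∂P)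
            + ∫ ω', gradient (fun θ' => ℓ θ' ω') θ j * gradient (fun θ' => ℓ θ' ω') θ i ∂P := by
            simp only [add_mul, ite_mul, zero_mul, one_mul, Finset.sum_add_distrib, ite_and]
            simp [Finset.sum_ite_eq' Finset.univ, Finset.sum_ite_eq Finset.univ]
        _ = 2 * ∫ ω', gradient (fun θ' => ℓ θ' ω') θ i
              * gradient (fun θ' => ℓ θ' ω') θ j ∂P := by rw [e2]; ring
        _ = (if i = j then ∫ ω', ‖gradient (fun θ' => ℓ θ' ω') θ‖ ^ 2 ∂P else 0)
            + (if i ≠ j then 2 * ∫ ω', (gradient (fun θ' => ℓ θ' ω') θ i)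
                * (gradient (fun θ' => ℓ θ' ω') θ j) ∂P else 0) := by simp [hij]
  -- a.e. transport to the product
  have hmap : Measure.map Prod.snd (μd.prod P) = P := by
    rw [Measure.map_snd_prod]; simp
  have hGood : ∀ᵐ p : Ωd × Ω' ∂(μd.prod P),
      ContDiff ℝ 3 (fun θ => ℓ θ p.2) ∧
      (∀ θ, ‖iteratedFDeriv ℝ 3 (fun θ' => ℓ θ' p.2) θ‖ ≤ D₁) ∧
      (∀ θ, ∀ k : Fin d, |gradient (fun θ' => ℓ θ' p.2) θ k| ≤ D₅) := by
    exact ae_of_ae_map (f := (Prod.snd : Ωd × Ω' → Ω'))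
      (p := fun ω' => ContDiff ℝ 3 (fun θ => ℓ θ ω') ∧
        (∀ θ, ‖iteratedFDeriv ℝ 3 (fun θ' => ℓ θ' ω') θ‖ ≤ D₁) ∧
        (∀ θ, ∀ k : Fin d, |gradient (fun θ' => ℓ θ' ω') θ k| ≤ D₅))
      measurable_snd.aemeasurable (by rw [hmap]; exact hℓae)
  -- pointwise error bound
  have hptwise : ∀ᵐ p : Ωd × Ω' ∂(μd.prod P),
      |S p ^ 2 * Phi p.1 - T p| ≤ c ^ 2 * W p.1 := by
    filter_upwards [hGood] with p hp
    obtain ⟨h3, hd3, hg5⟩ := hp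
    have hdiff : DifferentiableAt ℝ (fun θ' => ℓ θ' p.2) θ :=
      (h3.differentiable (by norm_num)).differentiableAt
    have hΔn : (0:ℝ) ≤ ‖Δ p.1‖ := norm_nonneg _
    have hφn : (0:ℝ) ≤ ‖φ (Δ p.1)‖ := norm_nonneg _
    have hgn : ‖gradient (fun θ' => ℓ θ' p.2) θ‖ ≤ d * D₅ := by
      have h1 : ‖gradient (fun θ' => ℓ θ' p.2) θ‖ ^ 2 ≤ d * D₅ ^ 2 := by
        rw [norm_sq_eq_sum]
        calc ∑ k, gradient (fun θ' => ℓ θ' p.2) θ k ^ 2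
            ≤ ∑ _k : Fin d, D₅ ^ 2 := Finset.sum_le_sum fun k _ => by
              have h5 := hg5 θ k
              nlinarith [abs_nonneg (gradient (fun θ' => ℓ θ' p.2) θ k),
                sq_abs (gradient (fun θ' => ℓ θ' p.2) θ k)]
          _ = d * D₅ ^ 2 := by
              simp [Finset.sum_const, Finset.card_univ, nsmul_eq_mul]
      have h2 : (d : ℝ) * D₅ ^ 2 ≤ (d * D₅) ^ 2 := by nlinarith
      exact le_of_pow_le_pow_left₀ two_ne_zero (by positivity) (h1.trans h2)
    have hipb : |ip p| ≤ (d * D₅) * ‖Δ p.1‖ := by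
      have e : ip p = (inner ℝ (gradient (fun θ' => ℓ θ' p.2) θ) (Δ p.1) : ℝ) := by
        rw [inner_sum_eq]
      rw [e]
      calc |(inner ℝ (gradient (fun θ' => ℓ θ' p.2) θ) (Δ p.1) : ℝ)|
          ≤ ‖gradient (fun θ' => ℓ θ' p.2) θ‖ * ‖Δ p.1‖ := abs_real_inner_le_norm _ _
        _ ≤ (d * D₅) * ‖Δ p.1‖ := mul_le_mul_of_nonneg_right hgn hΔn
    have hfder2 : fderiv ℝ (fun θ' => ℓ θ' p.2) θ (c • Δ p.1) = c * ip p := by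
      rw [fderiv_apply_eq_sum _ _ _ hdiff]
      simp only [hip, PiLp.smul_apply, smul_eq_mul]
      rw [Finset.mul_sum]
      exact Finset.sum_congr rfl fun k _ => by ring
    have hkey := taylor_sym (fun θ' => ℓ θ' p.2) D₁ h3 hd3 θ (c • Δ p.1)
    have hnc : ‖c • Δ p.1‖ = c * ‖Δ p.1‖ := by
      rw [norm_smul, Real.norm_eq_abs, abs_of_pos hc]
    have hR : |S p - ip p| ≤ D₁ * c ^ 2 * ‖Δ p.1‖ ^ 3 := by
      have e : S p - ip p = ((fun θ' => ℓ θ' p.2) (θ + c • Δ p.1)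
          - (fun θ' => ℓ θ' p.2) (θ - c • Δ p.1)
          - 2 * fderiv ℝ (fun θ' => ℓ θ' p.2) θ (c • Δ p.1)) / (2 * c) := by
        rw [hfder2]
        simp only [hS]
        field_simp
      rw [e, abs_div, abs_of_pos (by positivity : (0:ℝ) < 2 * c), div_le_iff₀ (by positivity)]
      calc |(fun θ' => ℓ θ' p.2) (θ + c • Δ p.1) - (fun θ' => ℓ θ' p.2) (θ - c • Δ p.1)
            - 2 * fderiv ℝ (fun θ' => ℓ θ' p.2) θ (c • Δ p.1)|
          ≤ 2 * D₁ * ‖c • Δ p.1‖ ^ 3 := hkey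
        _ = D₁ * c ^ 2 * ‖Δ p.1‖ ^ 3 * (2 * c) := by rw [hnc]; ring
    have hR' : |S p - ip p| ≤ D₁ * ‖Δ p.1‖ ^ 3 := by
      refine hR.trans ?_
      calc D₁ * c ^ 2 * ‖Δ p.1‖ ^ 3 = D₁ * ‖Δ p.1‖ ^ 3 * c ^ 2 := by ring
        _ ≤ D₁ * ‖Δ p.1‖ ^ 3 * 1 := by
            refine mul_le_mul_of_nonneg_left hc2 ?_
            have := norm_nonneg (Δ p.1)
            positivity
        _ = D₁ * ‖Δ p.1‖ ^ 3 := mul_one _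
    have hSb : |S p + ip p| ≤ 2 * (d * D₅) * ‖Δ p.1‖ + D₁ * ‖Δ p.1‖ ^ 3 := by
      have e : S p + ip p = (S p - ip p) + 2 * ip p := by ring
      rw [e]
      calc |(S p - ip p) + 2 * ip p| ≤ |S p - ip p| + |2 * ip p| := abs_add_le _ _
        _ ≤ D₁ * ‖Δ p.1‖ ^ 3 + 2 * ((d * D₅) * ‖Δ p.1‖) := by
            rw [abs_mul, abs_two]
            exact add_le_add hR' (mul_le_mul_of_nonneg_left hipb (by norm_num))
        _ = 2 * (d * D₅) * ‖Δ p.1‖ + D₁ * ‖Δ p.1‖ ^ 3 := by ring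
    have hPhib : |Phi p.1| ≤ ‖φ (Δ p.1)‖ ^ 2 := by
      simp only [hPhi]
      rw [abs_mul]
      calc |φ (Δ p.1) i| * |φ (Δ p.1) j| ≤ ‖φ (Δ p.1)‖ * ‖φ (Δ p.1)‖ :=
            mul_le_mul (coord_le_norm _ i) (coord_le_norm _ j) (abs_nonneg _) hφn
        _ = ‖φ (Δ p.1)‖ ^ 2 := by ring
    have e2 : S p ^ 2 * Phi p.1 - T p = ((S p - ip p) * (S p + ip p)) * Phi p.1 := by
      simp only [hT]; ring
    rw [e2, abs_mul, abs_mul]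
    have hb1 : 0 ≤ D₁ * c ^ 2 * ‖Δ p.1‖ ^ 3 := by positivity
    have hb2 : 0 ≤ 2 * (d * D₅) * ‖Δ p.1‖ + D₁ * ‖Δ p.1‖ ^ 3 := by positivity
    calc |S p - ip p| * |S p + ip p| * |Phi p.1|
        ≤ (D₁ * c ^ 2 * ‖Δ p.1‖ ^ 3) * (2 * (d * D₅) * ‖Δ p.1‖ + D₁ * ‖Δ p.1‖ ^ 3)
            * ‖φ (Δ p.1)‖ ^ 2 := by
          refine mul_le_mul ?_ hPhib (abs_nonneg _) (by positivity)
          exact mul_le_mul hR hSb (abs_nonneg _) hb1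
      _ = c ^ 2 * W p.1 := by simp only [hWdef]; push_cast; ring
  -- integrability of the error and of the full integrand
  have hWint : Integrable W μd := by
    rw [hWdef]
    exact ((hmint 3 (by norm_num)).const_mul _).add ((hmint 2 (by norm_num)).const_mul _)
  have hWprod : Integrable (fun p : Ωd × Ω' => W p.1) (μd.prod P) := by
    have e : (fun p : Ωd × Ω' => W p.1) = fun p : Ωd × Ω' => W p.1 * (fun _ : Ω' => (1:ℝ)) p.2 := by
      funext p; simp
    rw [e]
    exact hWint.mul_prod (integrable_const 1)
  have hE_int : Integrable (fun p : Ωd × Ω' => S p ^ 2 * Phi p.1 - T p) (μd.prod P) := by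
    refine Integrable.mono' (hWprod.const_mul (c ^ 2))
      (hImeas.aestronglyMeasurable.sub hT_int.aestronglyMeasurable) ?_
    filter_upwards [hptwise] with p h
    rw [Real.norm_eq_abs]
    exact h
  have hI_int : Integrable (fun p : Ωd × Ω' => S p ^ 2 * Phi p.1) (μd.prod P) := by
    have h2 := hT_int.add hE_int
    have e : (fun p : Ωd × Ω' => S p ^ 2 * Phi p.1)
        = (T + fun p : Ωd × Ω' => S p ^ 2 * Phi p.1 - T p) := by
      funext p; simp
    rw [e]; exact h2
  -- final chain
  have hWposval : ∫ ωd, W ωd ∂μd ≤ D₁ ^ 2 * D₂ + 2 * d * D₅ * D₁ * D₂ := by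
    rw [hWdef, integral_add ((hmint 3 (by norm_num)).const_mul _)
      ((hmint 2 (by norm_num)).const_mul _), integral_const_mul, integral_const_mul]
    have m3 := hmval 3 (by norm_num)
    have m2 := hmval 2 (by norm_num)
    have c1 : (0:ℝ) ≤ D₁ ^ 2 := sq_nonneg _
    have c2 : (0:ℝ) ≤ 2 * d * D₅ * D₁ := by positivity
    exact add_le_add (mul_le_mul_of_nonneg_left m3 c1) (mul_le_mul_of_nonneg_left m2 c2)
  have hsplit : ∫ p, S p ^ 2 * Phi p.1 ∂(μd.prod P) - M
      = ∫ p, (S p ^ 2 * Phi p.1 - T p) ∂(μd.prod P) := by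
    rw [integral_sub hI_int hT_int, hTvalM]
  rw [hsplit]
  calc |∫ p, (S p ^ 2 * Phi p.1 - T p) ∂(μd.prod P)|
      = ‖∫ p, (S p ^ 2 * Phi p.1 - T p) ∂(μd.prod P)‖ := (Real.norm_eq_abs _).symm
    _ ≤ ∫ p, ‖S p ^ 2 * Phi p.1 - T p‖ ∂(μd.prod P) := norm_integral_le_integral_norm _
    _ ≤ ∫ p, c ^ 2 * W p.1 ∂(μd.prod P) := by
        refine integral_mono_ae hE_int.norm (hWprod.const_mul (c ^ 2)) ?_
        filter_upwards [hptwise] with p h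
        rw [Real.norm_eq_abs]
        exact h
    _ = c ^ 2 * ∫ p, W p.1 ∂(μd.prod P) := integral_const_mul _ _
    _ = c ^ 2 * ∫ ωd, W ωd ∂μd := by
        congr 1
        have e : (fun p : Ωd × Ω' => W p.1)
            = fun p : Ωd × Ω' => W p.1 * (fun _ : Ω' => (1:ℝ)) p.2 := by
          funext p; simp
        rw [e, integral_prod_mul W (fun _ : Ω' => (1:ℝ))]
        simp
    _ ≤ c ^ 2 * (D₁ ^ 2 * D₂ + 2 * d * D₅ * D₁ * D₂) :=
        mul_le_mul_of_nonneg_left hWposval (sq_nonneg c)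
    _ = (D₁ ^ 2 * D₂ + 2 * d * D₅ * D₁ * D₂) * c ^ 2 := by ring
end
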